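/- Let N ≥ 1 and τ > 0. Let R : ℝ → (N×N real matrices) be continuous with R(t)_{mn} ≥ 0 for all m ≠ n and all t ∈ [0,τ]; let p^eq : ℝ → ℝ^N be continuous with p^eq(t)_n > 0 and detailed balance R(t)_{nm}·p^eq(t)_m = R(t)_{mn}·p^eq(t)_n for all n, m, t ∈ [0,τ]; let p : ℝ → ℝ^N be differentiable on [0,τ] with p(t)_n > 0; and let v : ℝ → ℝ^N be continuous and satisfy p'(t) = K_{p(t)} v(t) for all t ∈ [0,τ], where (K_{p(t)} u)_n := Σ_{m≠n} R(t)_{nm} · p^eq(t)_m · Φ(p(t)_n/p^eq(t)_n, p(t)_m/p^eq(t)_m) · (u_n − u_m). Then ( Σ_n |p(τ)_n − p(0)_n| )² ≤ 2 · ( ∫₀^τ Σ_{n≠m} R(t)_{mn} · p(t)_n dt ) · ( ∫₀^τ ⟨v(t), K_{p(t)} v(t)⟩ dt ). -/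

import Mathlib

/-- The logarithmic mean of two positive real numbers. -/
noncomputable def logMean (x y : ℝ) : ℝ :=
  if x = y then x else (x - y) / (Real.log x - Real.log y)

/-- The Onsager-type matrix `K_p` acting on a vector `v`:
`(K_p v)_n = Σ_{m≠n} R_{nm} p^eq_m Φ(p_n/p^eq_n, p_m/p^eq_m) (v_n − v_m)`. -/
noncomputable def Kop {N : ℕ} (R : Matrix (Fin N) (Fin N) ℝ) (peq p v : Fin N → ℝ) :
    Fin N → ℝ :=
  fun n => ∑ m ∈ Finset.univ.filter (· ≠ n),
    R n m * peq m * logMean (p n / peq n) (p m / peq m) * (v n - v m)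


section Aux

lemma logMean_comm (x y : ℝ) : logMean x y = logMean y x := by
  unfold logMean
  rcases eq_or_ne x y with h | h
  · simp [h]
  · rw [if_neg h, if_neg (Ne.symm h), ← neg_div_neg_eq]
    ring_nf

lemma logMean_pos {x y : ℝ} (hx : 0 < x) (hy : 0 < y) : 0 < logMean x y := by
  unfold logMean
  rcases eq_or_ne x y with h | h
  · simpa [h] using hy
  · rw [if_neg h]
    rcases h.lt_or_gt with hlt | hlt
    · exact div_pos_of_neg_of_neg (by linarith) (by simpa [sub_neg] using Real.log_lt_log hx hlt)
    · exact div_pos (by linarith) (by simpa [sub_pos] using Real.log_lt_log hy hlt)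

lemma log_lower {r : ℝ} (hr : 1 < r) : 2*(r-1)/(r+1) ≤ Real.log r := by
  set f : ℝ → ℝ := fun x => Real.log x - 2*(x-1)/(x+1) with hf
  have key : ∀ x ∈ Set.Ici (1:ℝ), HasDerivAt f ((x-1)^2/(x*(x+1)^2)) x := by
    intro x hx
    have hx0 : (0:ℝ) < x := lt_of_lt_of_le one_pos hx
    have h1 : HasDerivAt Real.log (1/x) x := by
      simpa [one_div] using Real.hasDerivAt_log hx0.ne'
    have h2 : HasDerivAt (fun x : ℝ => 2*(x-1)/(x+1)) ((2*1*(x+1) - 2*(x-1)*1)/(x+1)^2) x := by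
      simpa [Pi.div_def] using (((hasDerivAt_id x).sub_const 1).const_mul 2).div ((hasDerivAt_id x).add_const 1)
        (by positivity)
    have := h1.sub h2
    refine this.congr_deriv ?_
    field_simp
    ring
  have hmono : MonotoneOn f (Set.Ici (1:ℝ)) := by
    apply monotoneOn_of_deriv_nonneg (convex_Ici 1)
    · exact fun x hx => ((key x hx).continuousAt).continuousWithinAt
    · intro x hx
      rw [interior_Ici] at hx
      exact ((key x (le_of_lt hx : (1:ℝ) ≤ x)).differentiableAt).differentiableWithinAt
    · intro x hx
      rw [interior_Ici] at hx
      rw [(key x (le_of_lt hx : (1:ℝ) ≤ x)).deriv]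
      have hx0 : (0:ℝ) < x := lt_trans one_pos hx
      positivity
  have h01 : f 1 ≤ f r := hmono (Set.self_mem_Ici) (Set.mem_Ici.mpr hr.le) hr.le
  simp [hf, Real.log_one] at h01
  linarith [h01]

lemma logMean_le_am {x y : ℝ} (hx : 0 < x) (hy : 0 < y) : logMean x y ≤ (x+y)/2 := by
  have main : ∀ a b : ℝ, 0 < b → b < a → logMean a b ≤ (a+b)/2 := by
    intro a b hb hba
    have ha : 0 < a := lt_trans hb hba
    have hd : 0 < Real.log a - Real.log b := sub_pos.mpr (Real.log_lt_log hb hba)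
    rw [logMean, if_neg (ne_of_gt hba)]
    rw [div_le_div_iff₀ hd (by norm_num : (0:ℝ) < 2)]
    have hr : 1 < a/b := (one_lt_div hb).mpr hba
    have := log_lower hr
    have hlog : Real.log (a/b) = Real.log a - Real.log b := Real.log_div ha.ne' hb.ne'
    rw [hlog] at this
    have heq : 2*(a/b-1)/(a/b+1) = 2*(a-b)/(a+b) := by
      rw [div_eq_div_iff (by positivity) (by positivity)]
      field_simp
    rw [heq] at this
    -- this : 2*(a-b)/(a+b) ≤ log a - log b ; goal : (a - b) * 2 ≤ (a+b) * (log a - log b)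
    rw [div_le_iff₀ (by positivity)] at this
    nlinarith
  rcases lt_trichotomy x y with h | h | h
  · rw [logMean_comm]; have := main y x hx h; linarith [this]
  · rw [logMean, if_pos h]; subst h; linarith
  · have := main x y hy h; linarith [this]


lemma sq_le_two_mul_of_forall {L a b : ℝ} (hL : 0 ≤ L) (ha : 0 ≤ a) (hb : 0 ≤ b)
    (h : ∀ lam : ℝ, 0 < lam → L ≤ lam/2 * a + (1/lam) * b) : L^2 ≤ 2*a*b := by
  rcases eq_or_lt_of_le hL with hL0 | hL
  · nlinarith
  rcases eq_or_lt_of_le ha with ha0 | ha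
  · exfalso
    have := h ((b+1)/L) (by positivity)
    rw [← ha0] at this
    have h2 : (1/((b+1)/L)) * b = L * (b/(b+1)) := by field_simp
    rw [h2] at this
    have h3 : b/(b+1) < 1 := (div_lt_one (by linarith)).mpr (by linarith)
    nlinarith
  rcases eq_or_lt_of_le hb with hb0 | hb
  · exfalso
    have := h (L/(a+1)) (by positivity)
    rw [← hb0] at this
    have h3 : L/(a+1)/2 * a < L := by
      rw [div_div, div_mul_eq_mul_div, div_lt_iff₀ (by positivity)]
      nlinarith
    simp at this
    linarith
  · set s := Real.sqrt (2*b/a) with hs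
    have hspos : 0 < s := Real.sqrt_pos.mpr (by positivity)
    have hs2 : a * s^2 = 2*b := by
      rw [hs, Real.sq_sqrt (by positivity)]
      field_simp
    have hls := h s hspos
    -- L ≤ s/2*a + b/s ; multiply by s : L*s ≤ s^2*a/2 + b = 2b
    have h4 : L * s ≤ 2*b := by
      have : (s/2*a + (1/s)*b) * s = s^2*a/2 + b := by field_simp
      nlinarith
    nlinarith [mul_pos hspos hspos, sq_nonneg (L*s - 2*b), mul_le_mul_of_nonneg_left h4 (mul_pos hL hspos).le]


lemma swap_sum {N : ℕ} (f : Fin N → Fin N → ℝ) :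
    ∑ n, ∑ m ∈ Finset.univ.filter (· ≠ n), f n m
      = ∑ n, ∑ m ∈ Finset.univ.filter (· ≠ n), f m n := by
  simp only [Finset.sum_filter]
  rw [Finset.sum_comm]
  refine Finset.sum_congr rfl fun n _ => Finset.sum_congr rfl fun m _ => ?_
  simp only [ne_comm]

section
variable {N : ℕ} (R : Matrix (Fin N) (Fin N) ℝ) (peq p v : Fin N → ℝ)

lemma Kop_apply (n : Fin N) :
    Kop R peq p v n = ∑ m ∈ Finset.univ.filter (· ≠ n),
      (R n m * peq m * logMean (p n / peq n) (p m / peq m)) * (v n - v m) := rfl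

variable (hR : ∀ m n, m ≠ n → 0 ≤ R m n) (hpeq : ∀ n, 0 < peq n) (hp : ∀ n, 0 < p n)
    (hdb : ∀ n m, R n m * peq m = R m n * peq n)

include hR hpeq hp hdb

lemma Kop_sq_sum :
    ∑ n, ∑ m ∈ Finset.univ.filter (· ≠ n),
        (R n m * peq m * logMean (p n / peq n) (p m / peq m)) * (v n - v m)^2
      = 2 * ∑ n, v n * Kop R peq p v n := by
  set a : Fin N → Fin N → ℝ :=
    fun n m => R n m * peq m * logMean (p n / peq n) (p m / peq m) with ha
  have ha_symm : ∀ n m, a n m = a m n := by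
    intro n m
    simp only [ha]
    rw [hdb n m, logMean_comm]
  have hσ : ∑ n, v n * Kop R peq p v n
      = ∑ n, ∑ m ∈ Finset.univ.filter (· ≠ n), a n m * (v n * (v n - v m)) := by
    refine Finset.sum_congr rfl fun n _ => ?_
    rw [Kop_apply, Finset.mul_sum]
    exact Finset.sum_congr rfl fun m _ => by ring
  have hσ2 : ∑ n, v n * Kop R peq p v n
      = ∑ n, ∑ m ∈ Finset.univ.filter (· ≠ n), a n m * (v m * (v m - v n)) := by
    rw [hσ, swap_sum (f := fun n m => a n m * (v n * (v n - v m)))]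
    exact Finset.sum_congr rfl fun n _ => Finset.sum_congr rfl fun m _ => by rw [ha_symm m n]
  calc ∑ n, ∑ m ∈ Finset.univ.filter (· ≠ n), a n m * (v n - v m)^2
      = ∑ n, ∑ m ∈ Finset.univ.filter (· ≠ n),
          (a n m * (v n * (v n - v m)) + a n m * (v m * (v m - v n))) := by
        exact Finset.sum_congr rfl fun n _ => Finset.sum_congr rfl fun m _ => by ring
    _ = (∑ n, ∑ m ∈ Finset.univ.filter (· ≠ n), a n m * (v n * (v n - v m)))
        + ∑ n, ∑ m ∈ Finset.univ.filter (· ≠ n), a n m * (v m * (v m - v n)) := by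
        rw [← Finset.sum_add_distrib]
        exact Finset.sum_congr rfl fun n _ => Finset.sum_add_distrib
    _ = 2 * ∑ n, v n * Kop R peq p v n := by rw [← hσ, ← hσ2]; ring

lemma Kop_inner_nonneg : 0 ≤ ∑ n, v n * Kop R peq p v n := by
  have h := Kop_sq_sum R peq p v hR hpeq hp hdb
  have hnn : 0 ≤ ∑ n, ∑ m ∈ Finset.univ.filter (· ≠ n),
      (R n m * peq m * logMean (p n / peq n) (p m / peq m)) * (v n - v m)^2 := by
    refine Finset.sum_nonneg fun n _ => Finset.sum_nonneg fun m hm => ?_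
    have hmn : m ≠ n := by simpa using (Finset.mem_filter.mp hm).2
    have hRnn : 0 ≤ R n m := hR n m hmn.symm
    have hL : 0 < logMean (p n / peq n) (p m / peq m) :=
      logMean_pos (div_pos (hp n) (hpeq n)) (div_pos (hp m) (hpeq m))
    exact mul_nonneg (mul_nonneg (mul_nonneg hRnn (hpeq m).le) hL.le) (sq_nonneg _)
  linarith [h ▸ hnn]

lemma sum_abs_Kop_le (lam : ℝ) (hlam : 0 < lam) :
    ∑ n, |Kop R peq p v n| ≤
      lam/2 * (∑ n, ∑ m ∈ Finset.univ.filter (· ≠ n), R m n * p n)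
        + (1/lam) * (∑ n, v n * Kop R peq p v n) := by
  set a : Fin N → Fin N → ℝ :=
    fun n m => R n m * peq m * logMean (p n / peq n) (p m / peq m) with ha
  have ha_nonneg : ∀ n m, m ≠ n → 0 ≤ a n m := by
    intro n m hmn
    have hL : 0 < logMean (p n / peq n) (p m / peq m) :=
      logMean_pos (div_pos (hp n) (hpeq n)) (div_pos (hp m) (hpeq m))
    have hRnn := hR n m hmn.symm
    exact mul_nonneg (mul_nonneg hRnn (hpeq m).le) hL.le
  -- step A
  have stepA : ∑ n, |Kop R peq p v n|
      ≤ ∑ n, ∑ m ∈ Finset.univ.filter (· ≠ n), a n m * |v n - v m| := by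
    refine Finset.sum_le_sum fun n _ => ?_
    rw [Kop_apply]
    refine le_trans (Finset.abs_sum_le_sum_abs _ _) (Finset.sum_le_sum fun m hm => ?_)
    have hmn : m ≠ n := by simpa using (Finset.mem_filter.mp hm).2
    rw [abs_mul, abs_of_nonneg (ha_nonneg n m hmn)]
  -- step B : per-term AM-GM
  have stepB : ∑ n, ∑ m ∈ Finset.univ.filter (· ≠ n), a n m * |v n - v m|
      ≤ ∑ n, ∑ m ∈ Finset.univ.filter (· ≠ n),
          (lam/2 * a n m + (1/(2*lam)) * (a n m * (v n - v m)^2)) := by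
    refine Finset.sum_le_sum fun n _ => Finset.sum_le_sum fun m hm => ?_
    have hmn : m ≠ n := by simpa using (Finset.mem_filter.mp hm).2
    have h0 := ha_nonneg n m hmn
    have key : 2*lam*(a n m * |v n - v m|)
        ≤ 2*lam*(lam/2 * a n m + 1/(2*lam) * (a n m * (v n - v m)^2)) := by
      have h1 : 2*lam*(1/(2*lam)*(a n m*(v n - v m)^2)) = a n m * (v n - v m)^2 := by
        field_simp
      nlinarith [mul_nonneg h0 (sq_nonneg (lam - |v n - v m|)), sq_abs (v n - v m)]
    exact le_of_mul_le_mul_left key (by positivity)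
  -- step C : ∑∑ a ≤ activity
  have stepC : ∑ n, ∑ m ∈ Finset.univ.filter (· ≠ n), a n m
      ≤ ∑ n, ∑ m ∈ Finset.univ.filter (· ≠ n), R m n * p n := by
    have per : ∀ n m : Fin N, m ≠ n →
        a n m ≤ (R m n * p n + R n m * p m)/2 := by
      intro n m hmn
      have hcoeff : 0 ≤ R n m * peq m := mul_nonneg (hR n m hmn.symm) (hpeq m).le
      have h1 : a n m ≤ R n m * peq m * ((p n / peq n + p m / peq m)/2) := by
        simp only [ha]
        exact mul_le_mul_of_nonneg_left
          (logMean_le_am (div_pos (hp n) (hpeq n)) (div_pos (hp m) (hpeq m))) hcoeff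
      have e1 : peq n * (p n / peq n) = p n := mul_div_cancel₀ _ (hpeq n).ne'
      have e2 : peq m * (p m / peq m) = p m := mul_div_cancel₀ _ (hpeq m).ne'
      have h2 : R n m * peq m * ((p n / peq n + p m / peq m)/2)
          = (R m n * p n + R n m * p m)/2 := by
        calc R n m * peq m * ((p n / peq n + p m / peq m)/2)
            = (R n m * peq m * (p n / peq n) + R n m * peq m * (p m / peq m))/2 := by ring
          _ = (R m n * peq n * (p n / peq n) + R n m * peq m * (p m / peq m))/2 := by
              rw [hdb n m]
          _ = (R m n * p n + R n m * p m)/2 := by rw [mul_assoc, e1, mul_assoc, e2]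
      linarith
    calc ∑ n, ∑ m ∈ Finset.univ.filter (· ≠ n), a n m
        ≤ ∑ n, ∑ m ∈ Finset.univ.filter (· ≠ n), (R m n * p n + R n m * p m)/2 :=
          Finset.sum_le_sum fun n _ => Finset.sum_le_sum fun m hm =>
            per n m (by simpa using (Finset.mem_filter.mp hm).2)
      _ = ((∑ n, ∑ m ∈ Finset.univ.filter (· ≠ n), R m n * p n)
            + ∑ n, ∑ m ∈ Finset.univ.filter (· ≠ n), R n m * p m)/2 := by
          rw [← Finset.sum_add_distrib, Finset.sum_div]
          refine Finset.sum_congr rfl fun n _ => ?_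
          rw [← Finset.sum_add_distrib, Finset.sum_div]
      _ = ∑ n, ∑ m ∈ Finset.univ.filter (· ≠ n), R m n * p n := by
          rw [swap_sum (f := fun n m => R n m * p m)]
          ring
  -- assemble
  calc ∑ n, |Kop R peq p v n|
      ≤ ∑ n, ∑ m ∈ Finset.univ.filter (· ≠ n), a n m * |v n - v m| := stepA
    _ ≤ ∑ n, ∑ m ∈ Finset.univ.filter (· ≠ n),
          (lam/2 * a n m + (1/(2*lam)) * (a n m * (v n - v m)^2)) := stepB
    _ = lam/2 * (∑ n, ∑ m ∈ Finset.univ.filter (· ≠ n), a n m)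
        + (1/(2*lam)) * (∑ n, ∑ m ∈ Finset.univ.filter (· ≠ n), a n m * (v n - v m)^2) := by
        rw [Finset.mul_sum, Finset.mul_sum, ← Finset.sum_add_distrib]
        refine Finset.sum_congr rfl fun n _ => ?_
        rw [Finset.mul_sum, Finset.mul_sum, ← Finset.sum_add_distrib]
    _ ≤ lam/2 * (∑ n, ∑ m ∈ Finset.univ.filter (· ≠ n), R m n * p n)
        + (1/(2*lam)) * (2 * ∑ n, v n * Kop R peq p v n) := by
        refine add_le_add (mul_le_mul_of_nonneg_left stepC (by positivity)) ?_
        have hsq := Kop_sq_sum R peq p v hR hpeq hp hdb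
        simp only [ha]
        rw [hsq]
    _ = lam/2 * (∑ n, ∑ m ∈ Finset.univ.filter (· ≠ n), R m n * p n)
        + (1/lam) * (∑ n, v n * Kop R peq p v n) := by
        field_simp
end

end Aux

lemma measurable_logMean_comp {f g : ℝ → ℝ} (hf : Continuous f) (hg : Continuous g) :
    Measurable fun t => logMean (f t) (g t) := by
  unfold logMean
  exact Measurable.ite (isClosed_eq hf hg).measurableSet hf.measurable
    ((hf.measurable.sub hg.measurable).div
      ((Real.measurable_log.comp hf.measurable).sub (Real.measurable_log.comp hg.measurable)))
set_option maxHeartbeats 1600000 in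
/-- Classical speed limit: the squared total variation distance between the initial and final
distributions is bounded by twice the time-integrated dynamical activity times the total
entropy production `∫₀^τ ⟨v, K_p v⟩ dt`. -/
theorem total_variation_sq_le_two_mul_activity_mul_entropy (N : ℕ) (hN : 1 ≤ N)
    (τ : ℝ) (hτ : 0 < τ)
    (R : ℝ → Matrix (Fin N) (Fin N) ℝ) (hRcont : ∀ m n : Fin N, Continuous fun t => R t m n)
    (hR : ∀ t ∈ Set.Icc (0:ℝ) τ, ∀ m n : Fin N, m ≠ n → 0 ≤ R t m n)
    (peq : ℝ → Fin N → ℝ) (hpeqcont : ∀ n : Fin N, Continuous fun t => peq t n)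
    (hpeq : ∀ t ∈ Set.Icc (0:ℝ) τ, ∀ n, 0 < peq t n)
    (hdb : ∀ t ∈ Set.Icc (0:ℝ) τ, ∀ n m : Fin N, R t n m * peq t m = R t m n * peq t n)
    (p : ℝ → Fin N → ℝ) (hp : ∀ t ∈ Set.Icc (0:ℝ) τ, ∀ n, 0 < p t n)
    (v : ℝ → Fin N → ℝ) (hvcont : ∀ n : Fin N, Continuous fun t => v t n)
    (hderiv : ∀ t ∈ Set.Icc (0:ℝ) τ, ∀ n : Fin N,
      HasDerivAt (fun s => p s n) (Kop (R t) (peq t) (p t) (v t) n) t) :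
    (∑ n, |p τ n - p 0 n|)^2
      ≤ 2 * (∫ t in (0:ℝ)..τ, ∑ n, ∑ m ∈ Finset.univ.filter (· ≠ n), R t m n * p t n)
          * (∫ t in (0:ℝ)..τ, ∑ n, v t n * Kop (R t) (peq t) (p t) (v t) n) := by
  have hτle := hτ.le
  set c : ℝ → ℝ := fun t => min (max t 0) τ with hcdef
  have hcIcc : ∀ t, c t ∈ Set.Icc (0:ℝ) τ :=
    fun t => ⟨le_min (le_max_right t 0) hτle, min_le_right _ _⟩
  have hceq : ∀ t ∈ Set.Icc (0:ℝ) τ, c t = t := fun t ht => by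
    simp only [hcdef, max_eq_left ht.1, min_eq_left ht.2]
  have hccont : Continuous c := (continuous_id.max continuous_const).min continuous_const
  -- clamped data
  set q : ℝ → Fin N → ℝ := fun t => p (c t) with hqdef
  have hqcont : ∀ n, Continuous fun t => q t n := by
    intro n
    rw [continuous_iff_continuousAt]
    intro t
    exact ((hderiv (c t) (hcIcc t) n).continuousAt).comp hccont.continuousAt
  set D : ℝ → Fin N → ℝ := fun t => Kop (R (c t)) (peq (c t)) (q t) (v (c t)) with hDdef
  set A : ℝ → ℝ :=
    fun t => ∑ n, ∑ m ∈ Finset.univ.filter (· ≠ n), R (c t) m n * q t n with hAdef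
  set σ : ℝ → ℝ := fun t => ∑ n, v (c t) n * D t n with hσdef
  -- pointwise facts (hold for every real t since c t ∈ Icc)
  have hR' : ∀ t, ∀ m n : Fin N, m ≠ n → 0 ≤ R (c t) m n := fun t => hR (c t) (hcIcc t)
  have hpeq' : ∀ t n, 0 < peq (c t) n := fun t => hpeq (c t) (hcIcc t)
  have hq' : ∀ t n, 0 < q t n := fun t => hp (c t) (hcIcc t)
  have hdb' : ∀ t, ∀ n m : Fin N, R (c t) n m * peq (c t) m = R (c t) m n * peq (c t) n :=
    fun t => hdb (c t) (hcIcc t)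
  have hσ0 : ∀ t, 0 ≤ σ t := fun t =>
    Kop_inner_nonneg _ _ _ _ (hR' t) (hpeq' t) (hq' t) (hdb' t)
  -- continuity of bound functions
  have hRc : ∀ m n : Fin N, Continuous fun t => R (c t) m n :=
    fun m n => (hRcont m n).comp hccont
  have hpeqc : ∀ n, Continuous fun t => peq (c t) n := fun n => (hpeqcont n).comp hccont
  have hvc : ∀ n, Continuous fun t => v (c t) n := fun n => (hvcont n).comp hccont
  have hxc : ∀ n, Continuous fun t => q t n / peq (c t) n :=
    fun n => (hqcont n).div (hpeqc n) (fun t => (hpeq' t n).ne')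
  -- measurability of D
  have hDmeas : ∀ n, Measurable fun t => D t n := by
    intro n
    simp only [hDdef, Kop]
    refine Finset.measurable_sum _ fun m _ => ?_
    exact ((((hRc n m).measurable.mul (hpeqc m).measurable)).mul
      (measurable_logMean_comp (hxc n) (hxc m))).mul
      ((hvc n).measurable.sub (hvc m).measurable)
  -- bound function
  set g : Fin N → ℝ → ℝ := fun n t => ∑ m ∈ Finset.univ.filter (· ≠ n),
    R (c t) n m * peq (c t) m * ((q t n / peq (c t) n + q t m / peq (c t) m)/2)
      * |v (c t) n - v (c t) m| with hgdef
  have hgcont : ∀ n, Continuous (g n) := by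
    intro n
    refine continuous_finset_sum _ fun m _ => ?_
    exact (((hRc n m).mul (hpeqc m)).mul (((hxc n).add (hxc m)).div_const 2)).mul
      (((hvc n).sub (hvc m)).abs)
  have hDbound : ∀ n t, |D t n| ≤ g n t := by
    intro n t
    simp only [hDdef, hgdef, Kop]
    refine le_trans (Finset.abs_sum_le_sum_abs _ _) (Finset.sum_le_sum fun m hm => ?_)
    have hmn : m ≠ n := by simpa using (Finset.mem_filter.mp hm).2
    have hRa : 0 ≤ R (c t) n m := hR' t n m hmn.symm
    have hL : 0 < logMean (q t n / peq (c t) n) (q t m / peq (c t) m) :=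
      logMean_pos (div_pos (hq' t n) (hpeq' t n)) (div_pos (hq' t m) (hpeq' t m))
    rw [abs_mul, abs_of_nonneg (mul_nonneg (mul_nonneg hRa (hpeq' t m).le) hL.le)]
    refine mul_le_mul_of_nonneg_right ?_ (abs_nonneg _)
    exact mul_le_mul_of_nonneg_left
      (logMean_le_am (div_pos (hq' t n) (hpeq' t n)) (div_pos (hq' t m) (hpeq' t m)))
      (mul_nonneg hRa (hpeq' t m).le)
  -- integrability
  have hDint : ∀ n, IntervalIntegrable (fun t => D t n) MeasureTheory.volume 0 τ := by
    intro n
    rw [intervalIntegrable_iff_integrableOn_Icc_of_le hτle]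
    refine MeasureTheory.Integrable.mono' ((hgcont n).integrableOn_Icc)
      (hDmeas n).aestronglyMeasurable ?_
    exact Filter.Eventually.of_forall fun t => by
      simpa [Real.norm_eq_abs] using hDbound n t
  have hσmeas : Measurable σ := by
    simp only [hσdef]
    exact Finset.measurable_sum _ fun n _ => (hvc n).measurable.mul (hDmeas n)
  have hσint : IntervalIntegrable σ MeasureTheory.volume 0 τ := by
    rw [intervalIntegrable_iff_integrableOn_Icc_of_le hτle]
    have hbc : Continuous fun t => ∑ n, |v (c t) n| * g n t :=
      continuous_finset_sum _ fun n _ => ((hvc n).abs).mul (hgcont n)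
    refine MeasureTheory.Integrable.mono' (hbc.integrableOn_Icc)
      hσmeas.aestronglyMeasurable ?_
    refine Filter.Eventually.of_forall fun t => ?_
    rw [Real.norm_eq_abs]
    simp only [hσdef]
    refine le_trans (Finset.abs_sum_le_sum_abs _ _) (Finset.sum_le_sum fun n _ => ?_)
    rw [abs_mul]
    exact mul_le_mul_of_nonneg_left (hDbound n t) (abs_nonneg _)
  have hAcont : Continuous A := by
    refine continuous_finset_sum _ fun n _ => continuous_finset_sum _ fun m _ => ?_
    exact (hRc m n).mul (hqcont n)
  have hAint : IntervalIntegrable A MeasureTheory.volume 0 τ := hAcont.intervalIntegrable 0 τ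
  -- FTC
  have hftc : ∀ n, ∫ t in (0:ℝ)..τ, D t n = p τ n - p 0 n := by
    intro n
    refine intervalIntegral.integral_eq_sub_of_hasDerivAt (f := fun s => p s n) ?_ (hDint n)
    intro t ht
    rw [Set.uIcc_of_le hτle] at ht
    have h := hderiv t ht n
    have : D t n = Kop (R t) (peq t) (p t) (v t) n := by
      simp only [hDdef, hqdef, hceq t ht]
    rw [this]
    exact h
  -- the two integrals in the statement agree with those of A and σ
  have hIAeq : (∫ t in (0:ℝ)..τ, ∑ n, ∑ m ∈ Finset.univ.filter (· ≠ n), R t m n * p t n)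
      = ∫ t in (0:ℝ)..τ, A t := by
    refine intervalIntegral.integral_congr fun t ht => ?_
    rw [Set.uIcc_of_le hτle] at ht
    simp only [hAdef, hqdef, hceq t ht]
  have hIσeq : (∫ t in (0:ℝ)..τ, ∑ n, v t n * Kop (R t) (peq t) (p t) (v t) n)
      = ∫ t in (0:ℝ)..τ, σ t := by
    refine intervalIntegral.integral_congr fun t ht => ?_
    rw [Set.uIcc_of_le hτle] at ht
    simp only [hσdef, hDdef, hqdef, hceq t ht]
  rw [hIAeq, hIσeq]
  -- nonnegativity of the integrals
  have hIA0 : 0 ≤ ∫ t in (0:ℝ)..τ, A t := by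
    refine intervalIntegral.integral_nonneg hτle fun t ht => ?_
    refine Finset.sum_nonneg fun n _ => Finset.sum_nonneg fun m hm => ?_
    have hmn : m ≠ n := by simpa using (Finset.mem_filter.mp hm).2
    exact mul_nonneg (hR' t m n hmn) (hq' t n).le
  have hIσ0 : 0 ≤ ∫ t in (0:ℝ)..τ, σ t :=
    intervalIntegral.integral_nonneg hτle fun t _ => hσ0 t
  -- key estimate
  have key : ∀ lam : ℝ, 0 < lam → (∑ n, |p τ n - p 0 n|)
      ≤ lam/2 * (∫ t in (0:ℝ)..τ, A t) + (1/lam) * (∫ t in (0:ℝ)..τ, σ t) := by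
    intro lam hlam
    calc ∑ n, |p τ n - p 0 n| = ∑ n, |∫ t in (0:ℝ)..τ, D t n| := by
          refine Finset.sum_congr rfl fun n _ => ?_
          rw [hftc n]
      _ ≤ ∑ n, ∫ t in (0:ℝ)..τ, |D t n| := by
          refine Finset.sum_le_sum fun n _ => ?_
          simpa [Real.norm_eq_abs] using
            intervalIntegral.norm_integral_le_integral_norm (f := fun t => D t n) hτle
      _ = ∫ t in (0:ℝ)..τ, ∑ n, |D t n| :=
          (intervalIntegral.integral_finset_sum fun n _ => (hDint n).abs).symm
      _ ≤ ∫ t in (0:ℝ)..τ, (lam/2 * A t + (1/lam) * σ t) := by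
          refine intervalIntegral.integral_mono_on hτle ?_ ?_ ?_
          · have h := IntervalIntegrable.sum (μ := MeasureTheory.volume) (a := (0:ℝ)) (b := τ)
              Finset.univ (f := fun n t => |D t n|) (fun n _ => (hDint n).abs)
            have he : (fun t => ∑ n : Fin N, |D t n|) = ∑ n : Fin N, (fun t => |D t n|) := by
              funext t; simp
            rw [he]; exact h
          · exact (hAint.const_mul _).add (hσint.const_mul _)
          · intro t _
            exact sum_abs_Kop_le _ _ _ _ (hR' t) (hpeq' t) (hq' t) (hdb' t) lam hlam
      _ = lam/2 * (∫ t in (0:ℝ)..τ, A t) + (1/lam) * (∫ t in (0:ℝ)..τ, σ t) := by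
          rw [intervalIntegral.integral_add (hAint.const_mul _) (hσint.const_mul _),
            intervalIntegral.integral_const_mul, intervalIntegral.integral_const_mul]
  have hL0 : 0 ≤ ∑ n, |p τ n - p 0 n| := Finset.sum_nonneg fun n _ => abs_nonneg _
  have := sq_le_two_mul_of_forall hL0 hIA0 hIσ0 key
  linarith [this]
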